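/- Let S be a semigroup and h : I∞↗(ℕ) → S a semigroup homomorphism. If h is not injective, then h factors through the shift homomorphism f : I∞↗(ℕ) → ℤ: there exists a map g : ℤ → S with g(m + n) = g(m) * g(n) for all m, n ∈ ℤ and h = g ∘ f; consequently the image of h is a cyclic subgroup of S. In particular, every homomorphism of I∞↗(ℕ) into a semigroup is either a monomorphism or has image a cyclic group. -/

import Mathlib

open Set

/-- Cofinite monotone partial bijections of `ℕ`. -/
def IsCMPB (e : PartialEquiv ℕ ℕ) : Prop :=
  e.sourceᶜ.Finite ∧ e.targetᶜ.Finite ∧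
    ∀ ⦃m n : ℕ⦄, m ∈ e.source → n ∈ e.source → m < n → e m < e n

lemma IsCMPB.symm {e : PartialEquiv ℕ ℕ} (he : IsCMPB e) : IsCMPB e.symm := by
  obtain ⟨h1, h2, h3⟩ := he
  refine ⟨by simpa using h2, by simpa using h1, ?_⟩
  intro m n hm hn hmn
  have hm' : e.symm m ∈ e.source := e.map_target (by simpa using hm)
  have hn' : e.symm n ∈ e.source := e.map_target (by simpa using hn)
  have hEm : e (e.symm m) = m := e.right_inv hm
  have hEn : e (e.symm n) = n := e.right_inv hn
  rcases lt_trichotomy (e.symm m) (e.symm n) with h | h | h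
  · exact h
  · exfalso
    have : m = n := by rw [← hEm, ← hEn, h]
    omega
  · exfalso
    have := h3 hn' hm' h
    rw [hEm, hEn] at this
    omega

private lemma trans_source_compl_finite {e f : PartialEquiv ℕ ℕ}
    (he : e.sourceᶜ.Finite) (hf : f.sourceᶜ.Finite) : ((e.trans f).source)ᶜ.Finite := by
  rw [PartialEquiv.trans_source]
  have hT : (e.source ∩ e ⁻¹' f.sourceᶜ).Finite := by
    apply Set.Finite.of_finite_image ?_ (e.injOn.mono inter_subset_left)
    apply hf.subset
    rintro _ ⟨x, ⟨_, hx2⟩, rfl⟩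
    exact hx2
  apply (he.union hT).subset
  intro x hx
  simp only [mem_compl_iff, mem_inter_iff, not_and_or] at hx
  by_cases h : x ∈ e.source
  · rcases hx with h' | h'
    · exact absurd h h'
    · exact Or.inr ⟨h, h'⟩
  · exact Or.inl h

lemma IsCMPB.trans {e f : PartialEquiv ℕ ℕ} (he : IsCMPB e) (hf : IsCMPB f) :
    IsCMPB (e.trans f) := by
  refine ⟨trans_source_compl_finite he.1 hf.1, ?_, ?_⟩
  · have h : (((e.trans f).symm).source)ᶜ.Finite := by
      rw [PartialEquiv.trans_symm_eq_symm_trans_symm]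
      exact trans_source_compl_finite (by simpa using hf.2.1) (by simpa using he.2.1)
    simpa using h
  · intro m n hm hn hmn
    rw [PartialEquiv.trans_source] at hm hn
    show f (e m) < f (e n)
    exact hf.2.2 hm.2 hn.2 (he.2.2 hm.1 hn.1 hmn)

lemma isCMPB_congr {e e' : PartialEquiv ℕ ℕ} (h : e ≈ e') : IsCMPB e ↔ IsCMPB e' := by
  constructor <;> intro ⟨h1, h2, h3⟩
  · refine ⟨(PartialEquiv.EqOnSource.source_eq h) ▸ h1, (PartialEquiv.EqOnSource.target_eq h) ▸ h2, ?_⟩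
    intro m n hm hn hmn
    rw [← (PartialEquiv.EqOnSource.source_eq h)] at hm hn
    rw [← (PartialEquiv.EqOnSource.eqOn h) hm, ← (PartialEquiv.EqOnSource.eqOn h) hn]
    exact h3 hm hn hmn
  · refine ⟨(PartialEquiv.EqOnSource.source_eq h) ▸ h1, (PartialEquiv.EqOnSource.target_eq h) ▸ h2, ?_⟩
    intro m n hm hn hmn
    rw [(PartialEquiv.EqOnSource.eqOn h) hm, (PartialEquiv.EqOnSource.eqOn h) hn]
    exact h3 ((PartialEquiv.EqOnSource.source_eq h) ▸ hm) ((PartialEquiv.EqOnSource.source_eq h) ▸ hn) hmn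

/-- The type of partial bijections of `ℕ` up to equality on the source. -/
abbrev PEQ : Type := Quotient (PartialEquiv.eqOnSourceSetoid (α := ℕ) (β := ℕ))

instance : Mul PEQ :=
  ⟨Quotient.map₂ PartialEquiv.trans fun _ _ h _ _ h' => PartialEquiv.EqOnSource.trans' h h'⟩

lemma PEQ.mk_mul (e f : PartialEquiv ℕ ℕ) : (⟦e⟧ * ⟦f⟧ : PEQ) = ⟦e.trans f⟧ := rfl

instance : Semigroup PEQ where
  mul_assoc a b c := by
    induction a using Quotient.inductionOn with | h a =>
    induction b using Quotient.inductionOn with | h b =>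
    induction c using Quotient.inductionOn with | h c =>
    simp only [PEQ.mk_mul, PartialEquiv.trans_assoc]

/-- The property of being a cofinite monotone partial bijection, on `PEQ`. -/
def PEQ.IsGood : PEQ → Prop :=
  Quotient.lift IsCMPB fun _ _ h => propext (isCMPB_congr h)

lemma PEQ.IsGood.mul {a b : PEQ} (ha : a.IsGood) (hb : b.IsGood) : (a * b).IsGood := by
  induction a using Quotient.inductionOn with | h a =>
  induction b using Quotient.inductionOn with | h b =>
  exact IsCMPB.trans ha hb

/-- The semigroup `I∞↗(ℕ)` of cofinite monotone partial bijections of `ℕ`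
(partial bijections being identified when they have the same source and coincide there). -/
def Imon : Type := {q : PEQ // q.IsGood}

instance : Mul Imon := ⟨fun a b => ⟨a.1 * b.1, a.2.mul b.2⟩⟩

instance : Semigroup Imon where
  mul_assoc a b c := Subtype.ext (mul_assoc a.1 b.1 c.1)

/-- The underlying symmetrization (inverse partial bijection), on `PEQ`. -/
def PEQ.symm : PEQ → PEQ := Quotient.map PartialEquiv.symm fun _ _ h => PartialEquiv.EqOnSource.symm' h

lemma PEQ.IsGood.symm {a : PEQ} (ha : a.IsGood) : a.symm.IsGood := by
  induction a using Quotient.inductionOn with | h a =>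
  exact IsCMPB.symm ha

/-- The inverse in the inverse semigroup `I∞↗(ℕ)`. -/
instance : Inv Imon := ⟨fun a => ⟨a.1.symm, a.2.symm⟩⟩

/-- The source (domain) of an element of `PEQ`. -/
def PEQ.source : PEQ → Set ℕ :=
  Quotient.lift (fun e => e.source) fun _ _ h => (PartialEquiv.EqOnSource.source_eq h)

/-- The target (range) of an element of `PEQ`. -/
def PEQ.target : PEQ → Set ℕ :=
  Quotient.lift (fun e => e.target) fun _ _ h => (PartialEquiv.EqOnSource.target_eq h)

/-- The source (domain) of a cofinite monotone partial bijection of `ℕ`. -/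
def Imon.source (a : Imon) : Set ℕ := a.1.source

/-- The target (range) of a cofinite monotone partial bijection of `ℕ`. -/
def Imon.target (a : Imon) : Set ℕ := a.1.target

/-- The graph of an element of `PEQ`: pairs `(x, y)` with `x` in the source mapped to `y`. -/
def PEQ.graph : PEQ → Set (ℕ × ℕ) :=
  Quotient.lift (fun e => {p : ℕ × ℕ | p.1 ∈ e.source ∧ e p.1 = p.2}) fun e e' h => by
    ext p
    simp only [mem_setOf_eq]
    constructor
    · rintro ⟨h1, h2⟩
      exact ⟨(PartialEquiv.EqOnSource.source_eq h) ▸ h1, by rw [← (PartialEquiv.EqOnSource.eqOn h) h1]; exact h2⟩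
    · rintro ⟨h1, h2⟩
      refine ⟨(PartialEquiv.EqOnSource.source_eq h) ▸ h1, ?_⟩
      rw [(PartialEquiv.EqOnSource.eqOn h) ((PartialEquiv.EqOnSource.source_eq h) ▸ h1 : p.1 ∈ e.source)]
      exact h2

/-- The graph of a cofinite monotone partial bijection of `ℕ`. -/
def Imon.graph (a : Imon) : Set (ℕ × ℕ) := a.1.graph

/-- The natural partial order on idempotents: `ε ≤ ι` iff `ε * ι = ι * ε = ε`. -/
def idemLE (ε ι : Imon) : Prop := ε * ι = ε ∧ ι * ε = ε

/-- The everywhere-defined partial bijection `n ↦ n + 1`. -/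
def alphaPE : PartialEquiv ℕ ℕ where
  toFun n := n + 1
  invFun n := n - 1
  source := Set.univ
  target := {n : ℕ | 1 ≤ n}
  map_source' n _ := Nat.le_add_left 1 n
  map_target' _ _ := trivial
  left_inv' n _ := by show n + 1 - 1 = n; omega
  right_inv' n hn := by
    simp only [Set.mem_setOf_eq] at hn
    show n - 1 + 1 = n
    omega

lemma alphaPE_good : IsCMPB alphaPE := by
  refine ⟨by simp [alphaPE], ?_, ?_⟩
  · apply (Set.finite_singleton 0).subset
    intro n hn
    simp only [alphaPE, mem_compl_iff, mem_setOf_eq, not_le] at hn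
    simp only [mem_singleton_iff]
    omega
  · intro m n _ _ h
    show m + 1 < n + 1
    omega

/-- The generator `α : n ↦ n + 1` of the bicyclic subsemigroup. -/
def aGen : Imon := ⟨⟦alphaPE⟧, alphaPE_good⟩

/-- The generator `β : n ↦ n - 1` (with source `{n | 1 ≤ n}`) of the bicyclic subsemigroup. -/
def bGen : Imon := aGen⁻¹

/-- The bicyclic subsemigroup `C_ℕ(α, β)` of `I∞↗(ℕ)`, generated by `α` and `β`. -/
def Cbic : Subsemigroup Imon := Subsemigroup.closure {aGen, bGen}


section IHaux

/-- Equality in `Imon` from equality of sources and values. -/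
def ImonMk (e : PartialEquiv ℕ ℕ) (he : IsCMPB e) : Imon := ⟨⟦e⟧, he⟩

lemma imon_eq {e e' : PartialEquiv ℕ ℕ} {he : IsCMPB e} {he' : IsCMPB e'}
    (hs : e.source = e'.source) (hv : ∀ i ∈ e.source, e i = e' i) :
    ImonMk e he = ImonMk e' he' :=
  Subtype.ext (Quotient.sound ⟨hs, hv⟩)

lemma imon_mk_mul (e e' : PartialEquiv ℕ ℕ) (he : IsCMPB e) (he' : IsCMPB e') :
    ImonMk e he * ImonMk e' he' = ImonMk (e.trans e') (IsCMPB.trans he he') := rfl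

lemma imon_mk_inv (e : PartialEquiv ℕ ℕ) (he : IsCMPB e) :
    (ImonMk e he)⁻¹ = ImonMk e.symm (IsCMPB.symm he) := rfl

lemma imon_ne {e e' : PartialEquiv ℕ ℕ} {he : IsCMPB e} {he' : IsCMPB e'}
    (hne : ImonMk e he ≠ ImonMk e' he') : ¬ e ≈ e' := fun hr =>
  hne (Subtype.ext (Quotient.sound hr))

/-- tails of cofinite sets. -/
lemma cof_tail {s : Set ℕ} (hs : sᶜ.Finite) : ∃ N : ℕ, ∀ i, N ≤ i → i ∈ s := by
  obtain ⟨a, ha⟩ := hs.bddAbove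
  refine ⟨a + 1, fun i hi => ?_⟩
  by_contra hns
  have := ha hns
  omega

/-- The shift partial bijection. -/
def shPE (n : ℤ) : PartialEquiv ℕ ℕ where
  toFun i := ((i : ℤ) + n).toNat
  invFun i := ((i : ℤ) - n).toNat
  source := {i : ℕ | 0 ≤ (i : ℤ) + n}
  target := {i : ℕ | 0 ≤ (i : ℤ) - n}
  map_source' i hi := by simp only [Set.mem_setOf_eq] at *; omega
  map_target' i hi := by simp only [Set.mem_setOf_eq] at *; omega
  left_inv' i hi := by simp only [Set.mem_setOf_eq] at *; omega
  right_inv' i hi := by simp only [Set.mem_setOf_eq] at *; omega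

lemma shPE_good (n : ℤ) : IsCMPB (shPE n) := by
  refine ⟨?_, ?_, ?_⟩
  · apply (Set.finite_Iio (-n).toNat).subset
    intro i hi
    simp only [shPE, Set.mem_compl_iff, Set.mem_setOf_eq, not_le, Set.mem_Iio] at *
    omega
  · apply (Set.finite_Iio n.toNat).subset
    intro i hi
    simp only [shPE, Set.mem_compl_iff, Set.mem_setOf_eq, not_le, Set.mem_Iio] at *
    omega
  · intro i j hi hj hij
    simp only [shPE, Set.mem_setOf_eq] at *
    show ((i : ℤ) + n).toNat < ((j : ℤ) + n).toNat
    omega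

/-- The idempotent: identity on `[k, ∞)`. -/
def epsPE (k : ℕ) : PartialEquiv ℕ ℕ where
  toFun i := i
  invFun i := i
  source := {i : ℕ | k ≤ i}
  target := {i : ℕ | k ≤ i}
  map_source' i hi := hi
  map_target' i hi := hi
  left_inv' i _ := rfl
  right_inv' i _ := rfl

lemma epsPE_good (k : ℕ) : IsCMPB (epsPE k) := by
  refine ⟨?_, ?_, fun i j _ _ hij => hij⟩ <;>
  · apply (Set.finite_Iio k).subset
    intro i hi
    simp only [epsPE, Set.mem_compl_iff, Set.mem_setOf_eq, not_le, Set.mem_Iio] at *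
    omega

def shI (n : ℤ) : Imon := ImonMk (shPE n) (shPE_good n)

def epsI (k : ℕ) : Imon := ImonMk (epsPE k) (epsPE_good k)

def oneI : Imon := shI 0

/-- The conjugator: order isomorphism `ℕ → {i} ∪ [N, ∞)` (for `i < N`). -/
def gamPE (i N : ℕ) (hiN : i < N) : PartialEquiv ℕ ℕ where
  toFun k := if k = 0 then i else N + k - 1
  invFun m := if m = i then 0 else m - N + 1
  source := Set.univ
  target := insert i (Set.Ici N)
  map_source' k _ := by
    by_cases hk : k = 0 <;> simp [hk, Set.mem_insert_iff, Set.mem_Ici] <;> omega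
  map_target' m _ := trivial
  left_inv' k _ := by
    by_cases hk : k = 0
    · simp [hk]
    · rw [if_neg hk, if_neg (by omega)]
      omega
  right_inv' m hm := by
    rcases hm with hm | hm
    · simp [hm]
    · simp only [Set.mem_Ici] at hm
      rw [if_neg (show ¬ m = i by omega)]
      rw [if_neg (show ¬ m - N + 1 = 0 by omega)]
      omega

lemma gamPE_good (i N : ℕ) (hiN : i < N) : IsCMPB (gamPE i N hiN) := by
  refine ⟨by simp [gamPE], ?_, ?_⟩
  · apply (Set.finite_Iio N).subset
    intro m hm
    simp only [gamPE, Set.mem_compl_iff, Set.mem_insert_iff, Set.mem_Ici, not_or, not_le,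
      Set.mem_Iio] at *
    omega
  · intro k l _ _ hkl
    show (if k = 0 then i else N + k - 1) < (if l = 0 then i else N + l - 1)
    rcases Nat.eq_zero_or_pos k with hk | hk
    · rw [if_pos hk, if_neg (by omega)]; omega
    · rw [if_neg (by omega), if_neg (by omega)]; omega

def gamI (i N : ℕ) (hiN : i < N) : Imon := ImonMk (gamPE i N hiN) (gamPE_good i N hiN)

lemma sh_mul_sh (m n : ℤ) (hm : 0 ≤ m) : shI m * shI n = shI (m + n) := by
  rw [shI, shI, shI, imon_mk_mul]
  apply imon_eq
  · rw [PartialEquiv.trans_source]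
    ext i
    simp only [shPE, Set.mem_inter_iff, Set.mem_preimage, Set.mem_setOf_eq]
    omega
  · intro i hi
    rw [PartialEquiv.trans_source] at hi
    simp only [shPE, Set.mem_inter_iff, Set.mem_preimage, Set.mem_setOf_eq] at hi
    rw [PartialEquiv.trans_apply]
    simp only [shPE]
    omega

lemma sh_neg_mul_sh (k : ℕ) : shI (-(k : ℤ)) * shI k = epsI k := by
  rw [shI, shI, epsI, imon_mk_mul]
  apply imon_eq
  · rw [PartialEquiv.trans_source]
    ext i
    simp only [shPE, epsPE, Set.mem_inter_iff, Set.mem_preimage, Set.mem_setOf_eq]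
    omega
  · intro i hi
    rw [PartialEquiv.trans_source] at hi
    simp only [shPE, Set.mem_inter_iff, Set.mem_preimage, Set.mem_setOf_eq] at hi
    rw [PartialEquiv.trans_apply]
    simp only [shPE, epsPE]
    omega

lemma sh_mul_eps (N : ℕ) : shI (N : ℤ) * epsI N = shI (N : ℤ) := by
  rw [shI, epsI, imon_mk_mul]
  apply imon_eq
  · rw [PartialEquiv.trans_source]
    ext i
    simp only [shPE, epsPE, Set.mem_inter_iff, Set.mem_preimage, Set.mem_setOf_eq]
    omega
  · intro i hi
    rw [PartialEquiv.trans_apply]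
    simp only [shPE, epsPE]

lemma eps_zero : epsI 0 = oneI := by
  rw [epsI, oneI, shI]
  apply imon_eq
  · ext i
    simp only [epsPE, shPE, Set.mem_setOf_eq]
    omega
  · intro i _
    simp only [epsPE, shPE]
    omega

lemma imon_mul_one (a : Imon) : a * oneI = a := by
  obtain ⟨q, hq⟩ := a
  induction q using Quotient.inductionOn with | h e =>
  have hq' : IsCMPB e := hq
  show ImonMk e hq' * oneI = ImonMk e hq'
  rw [oneI, shI, imon_mk_mul]
  apply imon_eq
  · rw [PartialEquiv.trans_source]
    ext i
    simp only [shPE, Set.mem_inter_iff, Set.mem_preimage, Set.mem_setOf_eq]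
    exact ⟨fun h => h.1, fun h => ⟨h, by omega⟩⟩
  · intro i hi
    rw [PartialEquiv.trans_apply]
    simp [shPE]

lemma imon_one_mul (a : Imon) : oneI * a = a := by
  obtain ⟨q, hq⟩ := a
  induction q using Quotient.inductionOn with | h e =>
  have hq' : IsCMPB e := hq
  show oneI * ImonMk e hq' = ImonMk e hq'
  rw [oneI, shI, imon_mk_mul]
  apply imon_eq
  · rw [PartialEquiv.trans_source]
    ext i
    simp [shPE]
  · intro i hi
    rw [PartialEquiv.trans_apply]
    simp [shPE]

lemma eps_conj (k : ℕ) : shI (-1) * epsI k * shI 1 = epsI (k + 1) := by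
  rw [shI, shI, epsI, epsI, imon_mk_mul, imon_mk_mul]
  apply imon_eq
  · rw [PartialEquiv.trans_source, PartialEquiv.trans_source]
    ext i
    simp only [shPE, epsPE, Set.mem_inter_iff, Set.mem_preimage, Set.mem_setOf_eq]
    omega
  · intro i hi
    rw [PartialEquiv.trans_source, PartialEquiv.trans_source] at hi
    simp only [shPE, epsPE, Set.mem_inter_iff, Set.mem_preimage, Set.mem_setOf_eq] at hi
    rw [PartialEquiv.trans_apply, PartialEquiv.trans_apply]
    simp only [shPE, epsPE]
    omega

lemma conj1 (e : PartialEquiv ℕ ℕ) (he : IsCMPB e) (i j N : ℕ) (hiN : i < N) (hjN : j < N)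
    (hi : i ∈ e.source) (hij : e i = j)
    (htail : ∀ k, N ≤ k → k ∈ e.source ∧ e k = k) :
    gamI i N hiN * ImonMk e he * (gamI j N hjN)⁻¹ = oneI := by
  rw [gamI, gamI, imon_mk_inv, imon_mk_mul, imon_mk_mul, oneI, shI]
  apply imon_eq
  · rw [PartialEquiv.trans_source, PartialEquiv.trans_source, PartialEquiv.symm_source]
    ext k
    simp only [gamPE, shPE, Set.mem_inter_iff, Set.mem_preimage, Set.mem_univ, true_and,
      Set.mem_insert_iff, Set.mem_Ici, Set.mem_setOf_eq, PartialEquiv.trans_apply]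
    constructor
    · intro _
      omega
    · intro _
      rcases Nat.eq_zero_or_pos k with hk | hk
      · subst hk
        rw [if_pos rfl]
        exact ⟨hi, by rw [hij]; exact Or.inl rfl⟩
      · rw [if_neg (by omega)]
        obtain ⟨hmem, hval⟩ := htail (N + k - 1) (by omega)
        rw [hval]
        exact ⟨hmem, Or.inr (by omega)⟩
  · intro k hk
    rw [PartialEquiv.trans_source, PartialEquiv.trans_source] at hk
    rw [PartialEquiv.trans_apply, PartialEquiv.trans_apply]
    show (gamPE j N hjN).symm (e ((gamPE i N hiN) k)) = (shPE 0) k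
    rcases Nat.eq_zero_or_pos k with hk0 | hk0
    · subst hk0
      show (gamPE j N hjN).symm (e (if 0 = 0 then i else N + 0 - 1)) = (shPE 0) 0
      rw [if_pos rfl, hij]
      show (if j = j then 0 else j - N + 1) = ((0 : ℤ) + 0).toNat
      rw [if_pos rfl]
      rfl
    · show (gamPE j N hjN).symm (e (if k = 0 then i else N + k - 1)) = (shPE 0) k
      rw [if_neg (by omega)]
      obtain ⟨hmem, hval⟩ := htail (N + k - 1) (by omega)
      rw [hval]
      show (if N + k - 1 = j then 0 else N + k - 1 - N + 1) = ((k : ℤ) + 0).toNat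
      rw [if_neg (by omega)]
      omega

lemma conj2 (e : PartialEquiv ℕ ℕ) (he : IsCMPB e) (i j N : ℕ) (hiN : i < N) (hjN : j < N)
    (hmiss : ¬ (i ∈ e.source ∧ e i = j))
    (htail : ∀ k, N ≤ k → k ∈ e.source ∧ e k = k) :
    gamI i N hiN * ImonMk e he * (gamI j N hjN)⁻¹ = epsI 1 := by
  have hlt : ∀ hi : i ∈ e.source, e i < N := by
    intro hi'
    have := he.2.2 hi' (htail N le_rfl).1 hiN
    rw [(htail N le_rfl).2] at this
    exact this
  rw [gamI, gamI, imon_mk_inv, imon_mk_mul, imon_mk_mul, epsI]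
  apply imon_eq
  · rw [PartialEquiv.trans_source, PartialEquiv.trans_source, PartialEquiv.symm_source]
    ext k
    simp only [gamPE, epsPE, Set.mem_inter_iff, Set.mem_preimage, Set.mem_univ, true_and,
      Set.mem_insert_iff, Set.mem_Ici, Set.mem_setOf_eq, PartialEquiv.trans_apply]
    constructor
    · rintro ⟨hmem, htgt⟩
      rcases Nat.eq_zero_or_pos k with hk | hk
      · exfalso
        subst hk
        rw [if_pos rfl] at hmem htgt
        rcases htgt with htgt | htgt
        · exact hmiss ⟨hmem, htgt⟩
        · have := hlt hmem
          omega
      · omega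
    · intro hk
      rw [if_neg (by omega)]
      obtain ⟨hmem, hval⟩ := htail (N + k - 1) (by omega)
      rw [hval]
      exact ⟨hmem, Or.inr (by omega)⟩
  · intro k hk
    rw [PartialEquiv.trans_source, PartialEquiv.trans_source, PartialEquiv.symm_source] at hk
    simp only [gamPE, Set.mem_inter_iff, Set.mem_preimage, Set.mem_univ, true_and,
      Set.mem_insert_iff, Set.mem_Ici, PartialEquiv.trans_apply] at hk
    obtain ⟨hmem, htgt⟩ := hk
    have hk0 : 1 ≤ k := by
      by_contra hc
      have hk0 : k = 0 := by omega
      subst hk0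
      rw [if_pos rfl] at hmem htgt
      rcases htgt with htgt | htgt
      · exact hmiss ⟨hmem, htgt⟩
      · have := hlt hmem
        omega
    rw [PartialEquiv.trans_apply, PartialEquiv.trans_apply]
    show (gamPE j N hjN).symm (e ((gamPE i N hiN) k)) = (epsPE 1) k
    show (gamPE j N hjN).symm (e (if k = 0 then i else N + k - 1)) = (epsPE 1) k
    rw [if_neg (by omega)]
    obtain ⟨hmem', hval⟩ := htail (N + k - 1) (by omega)
    rw [hval]
    show (if N + k - 1 = j then 0 else N + k - 1 - N + 1) = k
    rw [if_neg (by omega)]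
    omega

lemma key {S : Type*} [Semigroup S] (h : Imon → S)
    (hhom : ∀ x y : Imon, h (x * y) = h x * h y)
    (s e : PartialEquiv ℕ ℕ) (hs : IsCMPB s) (he : IsCMPB e)
    (hsid : ∀ i ∈ s.source, s i = i)
    (heq : h (ImonMk s hs) = h (ImonMk e he))
    (hne : ¬ s ≈ e)
    (heid : ∃ N, ∀ k, N ≤ k → k ∈ e.source ∧ e k = k) :
    h oneI = h (epsI 1) := by
  obtain ⟨Ne, hNe⟩ := heid
  obtain ⟨Ns, hNs⟩ := cof_tail hs.1
  have hstail : ∀ M, ∀ k, Ns ≤ M → M ≤ k → k ∈ s.source ∧ s k = k := fun M k hM hk =>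
    ⟨hNs k (by omega), hsid k (hNs k (by omega))⟩
  by_cases hA : ∃ i ∈ e.source, i ∉ s.source ∨ e i ≠ i
  · obtain ⟨i, hie, hbad⟩ := hA
    set j := e i with hj
    set N := Ne + Ns + i + j + 1 with hNdef
    have hiN : i < N := by omega
    have hjN : j < N := by omega
    have h1 : gamI i N hiN * ImonMk e he * (gamI j N hjN)⁻¹ = oneI :=
      conj1 e he i j N hiN hjN hie rfl (fun k hk => hNe k (by omega))
    have h2 : gamI i N hiN * ImonMk s hs * (gamI j N hjN)⁻¹ = epsI 1 := by
      apply conj2 s hs i j N hiN hjN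
      · rintro ⟨his, hsij⟩
        rw [hsid i his] at hsij
        rcases hbad with hbad | hbad
        · exact hbad his
        · exact hbad hsij.symm
      · exact fun k hk => hstail N k (by omega) hk
    rw [← h1, ← h2, hhom, hhom, hhom, hhom, heq]
  · push_neg at hA
    have hmissing : ∃ i ∈ s.source, i ∉ e.source := by
      by_contra hc
      push_neg at hc
      apply hne
      refine ⟨Set.Subset.antisymm hc (fun i hi => (hA i hi).1), fun i hi => ?_⟩
      rw [hsid i hi, (hA i (hc i hi)).2]
    obtain ⟨i, his, hie⟩ := hmissing
    set N := Ne + Ns + i + 1 with hNdef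
    have hiN : i < N := by omega
    have h1 : gamI i N hiN * ImonMk s hs * (gamI i N hiN)⁻¹ = oneI :=
      conj1 s hs i i N hiN hiN his (hsid i his) (fun k hk => hstail N k (by omega) hk)
    have h2 : gamI i N hiN * ImonMk e he * (gamI i N hiN)⁻¹ = epsI 1 := by
      apply conj2 e he i i N hiN hiN
      · rintro ⟨hc, -⟩
        exact hie hc
      · exact fun k hk => hNe k (by omega)
    rw [← h1, ← h2, hhom, hhom, hhom, hhom, heq]

section Fsec

variable (f : Imon → ℤ)
  (hf : ∀ γ : Imon, ∃ N : ℕ, ∀ i j : ℕ, N ≤ i → (i, j) ∈ γ.graph →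
      (j : ℤ) = (i : ℤ) + f γ)

include hf

lemma fEq (e : PartialEquiv ℕ ℕ) (he : IsCMPB e) (c : ℤ) (N : ℕ)
    (hN : ∀ i, N ≤ i → i ∈ e.source ∧ (e i : ℤ) = (i : ℤ) + c) :
    f (ImonMk e he) = c := by
  obtain ⟨N₀, hN₀⟩ := hf (ImonMk e he)
  obtain ⟨hmem, hval⟩ := hN (max N N₀) (le_max_left _ _)
  have hg : ((max N N₀), e (max N N₀)) ∈ (ImonMk e he).graph := ⟨hmem, rfl⟩
  have := hN₀ _ _ (le_max_right _ _) hg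
  omega

lemma evShift (e : PartialEquiv ℕ ℕ) (he : IsCMPB e) :
    ∃ N : ℕ, ∀ i, N ≤ i → i ∈ e.source ∧ (e i : ℤ) = (i : ℤ) + f (ImonMk e he) := by
  obtain ⟨N₀, hN₀⟩ := hf (ImonMk e he)
  obtain ⟨N₁, hN₁⟩ := cof_tail he.1
  refine ⟨max N₀ N₁, fun i hi => ?_⟩
  have hmem : i ∈ e.source := hN₁ i (le_trans (le_max_right _ _) hi)
  exact ⟨hmem, hN₀ i (e i) (le_trans (le_max_left _ _) hi) ⟨hmem, rfl⟩⟩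

lemma fInv (e : PartialEquiv ℕ ℕ) (he : IsCMPB e) :
    f (ImonMk e.symm (IsCMPB.symm he)) = - f (ImonMk e he) := by
  obtain ⟨N₁, hN₁⟩ := evShift f hf e he
  obtain ⟨N₂, hN₂⟩ := evShift f hf e.symm (IsCMPB.symm he)
  set c := f (ImonMk e he)
  set c' := f (ImonMk e.symm (IsCMPB.symm he))
  set i := N₂ + N₁ + c'.natAbs with hidef
  obtain ⟨hm2, hv2⟩ := hN₂ i (by omega)
  set j := e.symm i with hj
  have hjs : j ∈ e.source := e.map_target (by simpa using hm2)
  have hjN : (j : ℤ) = (i : ℤ) + c' := hv2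
  have hj1 : N₁ ≤ j := by omega
  obtain ⟨hm1, hv1⟩ := hN₁ j hj1
  have : e j = i := e.right_inv (by simpa using hm2)
  omega

lemma fShI (n : ℤ) : f (shI n) = n := by
  rw [shI]
  apply fEq f hf _ _ _ n.natAbs
  intro i hi
  constructor
  · show 0 ≤ (i : ℤ) + n
    omega
  · show ((((i : ℤ) + n).toNat : ℕ) : ℤ) = (i : ℤ) + n
    omega

lemma fShMulSh (m n : ℤ) : f (shI m * shI n) = m + n := by
  rw [shI, shI, imon_mk_mul]
  apply fEq f hf _ _ _ (m.natAbs + n.natAbs)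
  intro i hi
  rw [PartialEquiv.trans_source, PartialEquiv.trans_apply]
  refine ⟨?_, ?_⟩
  · simp only [shPE, Set.mem_inter_iff, Set.mem_preimage, Set.mem_setOf_eq]
    omega
  · simp only [shPE]
    omega

/-- Absorption: for `N` large, `epsI N * γ` only remembers the shift of `γ`. -/
lemma epsAbsorb (e : PartialEquiv ℕ ℕ) (he : IsCMPB e) :
    ∃ N₀ : ℕ, ∀ N, N₀ ≤ N →
      epsI N * ImonMk e he = epsI N * shI (f (ImonMk e he)) := by
  obtain ⟨N₁, hN₁⟩ := evShift f hf e he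
  set c := f (ImonMk e he)
  refine ⟨N₁ + c.natAbs, fun N hN => ?_⟩
  rw [epsI, shI, imon_mk_mul, imon_mk_mul]
  apply imon_eq
  · rw [PartialEquiv.trans_source, PartialEquiv.trans_source]
    ext i
    simp only [epsPE, shPE, Set.mem_inter_iff, Set.mem_preimage, Set.mem_setOf_eq]
    constructor
    · rintro ⟨hi, -⟩
      exact ⟨hi, by omega⟩
    · rintro ⟨hi, -⟩
      exact ⟨hi, (hN₁ i (by omega)).1⟩
  · intro i hi
    rw [PartialEquiv.trans_source] at hi
    simp only [epsPE, Set.mem_inter_iff, Set.mem_preimage, Set.mem_setOf_eq] at hi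
    rw [PartialEquiv.trans_apply, PartialEquiv.trans_apply]
    obtain ⟨-, hv⟩ := hN₁ i (by omega)
    show e i = (((i : ℤ) + c).toNat)
    omega

lemma epsAbsorbI (γ : Imon) :
    ∃ N₀ : ℕ, ∀ N, N₀ ≤ N → epsI N * γ = epsI N * shI (f γ) := by
  obtain ⟨q, hq⟩ := γ
  induction q using Quotient.inductionOn with | h e =>
  exact epsAbsorb f hf e hq

end Fsec

lemma source_inter_pre (e : PartialEquiv ℕ ℕ) : e.source ∩ e ⁻¹' e.target = e.source :=
  Set.inter_eq_left.mpr (fun i hi => e.map_source hi)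

/-- From `x ∘ x⁻¹ = y ∘ x⁻¹` (as elements of `Imon`) deduce that `y` extends `x`. -/
lemma halfEq (x y : PartialEquiv ℕ ℕ) (hx : IsCMPB x) (hy : IsCMPB y)
    (hw : ImonMk (x.trans x.symm) (hx.trans hx.symm) = ImonMk (y.trans x.symm) (hy.trans hx.symm)) :
    x.source ⊆ y.source ∧ ∀ i ∈ x.source, x i = y i := by
  have rel : (x.trans x.symm) ≈ (y.trans x.symm) := Quotient.exact (congrArg Subtype.val hw)
  have hsrc : x.source = y.source ∩ y ⁻¹' x.target := by
    have := PartialEquiv.EqOnSource.source_eq rel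
    rw [PartialEquiv.trans_source, PartialEquiv.trans_source, PartialEquiv.symm_source,
      source_inter_pre] at this
    exact this
  constructor
  · intro i hi
    rw [hsrc] at hi
    exact hi.1
  · intro i hi
    have hiy : y i ∈ x.target := by
      have h2 := hi
      rw [hsrc] at h2
      exact h2.2
    have hmem : i ∈ (x.trans x.symm).source := by
      rw [PartialEquiv.trans_source, PartialEquiv.symm_source, source_inter_pre]
      exact hi
    have hval := PartialEquiv.EqOnSource.eqOn rel hmem
    rw [PartialEquiv.trans_apply, PartialEquiv.trans_apply, x.left_inv hi] at hval
    have := congrArg x hval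
    rw [x.right_inv hiy] at this
    exact this

lemma collapse2 {S : Type*} [Semigroup S]
    (f : Imon → ℤ)
    (hf : ∀ γ : Imon, ∃ N : ℕ, ∀ i j : ℕ, N ≤ i → (i, j) ∈ γ.graph →
      (j : ℤ) = (i : ℤ) + f γ)
    (h : Imon → S) (hhom : ∀ x y : Imon, h (x * y) = h x * h y)
    (x y : PartialEquiv ℕ ℕ) (hx : IsCMPB x) (hy : IsCMPB y)
    (huv : h (ImonMk x hx) = h (ImonMk y hy))
    (hne : ¬ x ≈ y)
    (hfe : f (ImonMk x hx) = f (ImonMk y hy)) :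
    h oneI = h (epsI 1) := by
  -- eventual identity of `y.trans x.symm`
  have heid : ∀ (a b : PartialEquiv ℕ ℕ) (ha : IsCMPB a) (hb : IsCMPB b),
      f (ImonMk a ha) = f (ImonMk b hb) →
      ∃ N, ∀ k, N ≤ k → k ∈ (b.trans a.symm).source ∧ (b.trans a.symm) k = k := by
    intro a b ha hb hab
    obtain ⟨N₁, hN₁⟩ := evShift f hf b hb
    obtain ⟨N₂, hN₂⟩ := evShift f hf a.symm (IsCMPB.symm ha)
    have hinv : f (ImonMk a.symm (IsCMPB.symm ha)) = - f (ImonMk a ha) := fInv f hf a ha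
    set c := f (ImonMk a ha) with hc
    refine ⟨N₁ + N₂ + c.natAbs, fun k hk => ?_⟩
    obtain ⟨hkb, hkv⟩ := hN₁ k (by omega)
    have hbk : N₂ ≤ b k := by omega
    obtain ⟨hks, hkv2⟩ := hN₂ (b k) hbk
    have hsrc : k ∈ (b.trans a.symm).source := by
      rw [PartialEquiv.trans_source]
      exact ⟨hkb, hks⟩
    refine ⟨hsrc, ?_⟩
    rw [PartialEquiv.trans_apply]
    omega
  -- identity property of `a.trans a.symm`
  have hsid : ∀ (a : PartialEquiv ℕ ℕ), ∀ i ∈ (a.trans a.symm).source, (a.trans a.symm) i = i := by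
    intro a i hi
    rw [PartialEquiv.trans_source, PartialEquiv.symm_source, source_inter_pre] at hi
    rw [PartialEquiv.trans_apply]
    exact a.left_inv hi
  by_cases hw : ImonMk (x.trans x.symm) (hx.trans hx.symm)
      = ImonMk (y.trans x.symm) (hy.trans hx.symm)
  · -- then the other pair must be distinct
    have hw' : ImonMk (y.trans y.symm) (hy.trans hy.symm)
        ≠ ImonMk (x.trans y.symm) (hx.trans hy.symm) := by
      intro hcontr
      obtain ⟨hs1, hv1⟩ := halfEq x y hx hy hw
      obtain ⟨hs2, hv2⟩ := halfEq y x hy hx hcontr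
      exact hne ⟨Set.Subset.antisymm hs1 hs2, fun i hi => hv1 i hi⟩
    have heq : h (ImonMk (y.trans y.symm) (hy.trans hy.symm))
        = h (ImonMk (x.trans y.symm) (hx.trans hy.symm)) := by
      have e1 : ImonMk (y.trans y.symm) (hy.trans hy.symm)
          = ImonMk y hy * (ImonMk y hy)⁻¹ := rfl
      have e2 : ImonMk (x.trans y.symm) (hx.trans hy.symm)
          = ImonMk x hx * (ImonMk y hy)⁻¹ := rfl
      rw [e1, e2, hhom, hhom, huv]
    exact key h hhom (y.trans y.symm) (x.trans y.symm) (hy.trans hy.symm) (hx.trans hy.symm)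
      (hsid y) heq (imon_ne hw') (heid y x hy hx hfe.symm)
  · have heq : h (ImonMk (x.trans x.symm) (hx.trans hx.symm))
        = h (ImonMk (y.trans x.symm) (hy.trans hx.symm)) := by
      have e1 : ImonMk (x.trans x.symm) (hx.trans hx.symm)
          = ImonMk x hx * (ImonMk x hx)⁻¹ := rfl
      have e2 : ImonMk (y.trans x.symm) (hy.trans hx.symm)
          = ImonMk y hy * (ImonMk x hx)⁻¹ := rfl
      rw [e1, e2, hhom, hhom, huv]
    exact key h hhom (x.trans x.symm) (y.trans x.symm) (hx.trans hx.symm) (hy.trans hx.symm)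
      (hsid x) heq (imon_ne hw) (heid x y hx hy hfe)

lemma shCollapse {S : Type*} [Semigroup S]
    (h : Imon → S) (hhom : ∀ x y : Imon, h (x * y) = h x * h y)
    (p q : ℤ) (hp : 0 ≤ p) (hq : 0 ≤ q) (hlt : p < q)
    (heq : h (shI p) = h (shI q)) :
    h oneI = h (epsI 1) := by
  set d := q + -p with hd
  have hd0 : 0 < d := by omega
  have s1 : h oneI = h (shI d) := by
    have e3 : h (shI p * shI (-p)) = h (shI q * shI (-p)) := by rw [hhom, hhom, heq]
    rw [sh_mul_sh p (-p) hp, sh_mul_sh q (-p) hq, add_neg_cancel] at e3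
    exact e3
  have s2 : h (shI (-d)) = h oneI := by
    have e4 : h (shI 0 * shI (-d)) = h (shI d * shI (-d)) := by
      rw [hhom, hhom, ← s1]
      rfl
    rw [sh_mul_sh 0 (-d) le_rfl, sh_mul_sh d (-d) (le_of_lt hd0), zero_add,
      add_neg_cancel] at e4
    exact e4
  have hdd : ((d.toNat : ℕ) : ℤ) = d := Int.toNat_of_nonneg (le_of_lt hd0)
  have s3 : h (epsI d.toNat) = h oneI := by
    have e5 : h (shI (-d) * shI d) = h (shI 0 * shI d) := by
      rw [hhom, hhom, s2]
      rfl
    rw [sh_mul_sh 0 d le_rfl, zero_add, ← hdd, sh_neg_mul_sh d.toNat] at e5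
    rw [e5, hdd, ← s1]
  -- now apply the key lemma to `oneI` and `epsI d.toNat`
  apply key h hhom (shPE 0) (epsPE d.toNat) (shPE_good 0) (epsPE_good _)
  · intro i _
    show (((i : ℤ) + 0).toNat) = i
    omega
  · exact s3.symm
  · rintro ⟨hsrc, -⟩
    have h0 : (0 : ℕ) ∈ (shPE 0).source := by
      show (0 : ℤ) ≤ (0 : ℕ) + 0
      omega
    rw [hsrc] at h0
    have : d.toNat ≤ 0 := h0
    omega
  · exact ⟨d.toNat, fun k hk => ⟨hk, rfl⟩⟩

lemma collapseAll {S : Type*} [Semigroup S]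
    (f : Imon → ℤ)
    (hf : ∀ γ : Imon, ∃ N : ℕ, ∀ i j : ℕ, N ≤ i → (i, j) ∈ γ.graph →
      (j : ℤ) = (i : ℤ) + f γ)
    (h : Imon → S) (hhom : ∀ x y : Imon, h (x * y) = h x * h y)
    (u v : Imon) (huv : h u = h v) (hne : u ≠ v) :
    h oneI = h (epsI 1) := by
  by_cases hfe : f u = f v
  · obtain ⟨qu, hqu⟩ := u
    obtain ⟨qv, hqv⟩ := v
    revert hqu hqv
    induction qu using Quotient.inductionOn with | h x => ?_
    induction qv using Quotient.inductionOn with | h y => ?_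
    intro hqu hqv huv hne hfe
    exact collapse2 f hf h hhom x y hqu hqv huv (imon_ne hne) hfe
  · obtain ⟨Nu, hu⟩ := epsAbsorbI f hf u
    obtain ⟨Nv, hv'⟩ := epsAbsorbI f hf v
    set N := Nu + Nv + (f u).natAbs + (f v).natAbs with hN
    have e1 : h (epsI N * u) = h (epsI N * v) := by rw [hhom, hhom, huv]
    rw [hu N (by omega), hv' N (by omega)] at e1
    have e2 : h (shI (N : ℤ) * (epsI N * shI (f u)))
        = h (shI (N : ℤ) * (epsI N * shI (f v))) := by
      simpa only [← hhom] using congrArg (fun z => h (shI (N : ℤ)) * z) e1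
    have absorb : ∀ c : ℤ, shI (N : ℤ) * (epsI N * shI c) = shI ((N : ℤ) + c) := by
      intro c
      rw [← mul_assoc, sh_mul_eps, sh_mul_sh _ _ (by omega)]
    rw [absorb, absorb] at e2
    have hup : (0 : ℤ) ≤ (N : ℤ) + f u := by
      have : (f u).natAbs ≤ N := by omega
      omega
    have hvp : (0 : ℤ) ≤ (N : ℤ) + f v := by
      have : (f v).natAbs ≤ N := by omega
      omega
    rcases lt_or_gt_of_ne (fun hc : (N : ℤ) + f u = (N : ℤ) + f v => hfe (by omega)) with hlt | hlt
    · exact shCollapse h hhom _ _ hup hvp hlt e2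
    · exact shCollapse h hhom _ _ hvp hup hlt e2.symm

lemma epsAll {S : Type*} [Semigroup S]
    (h : Imon → S) (hhom : ∀ x y : Imon, h (x * y) = h x * h y)
    (hone : h oneI = h (epsI 1)) : ∀ k, h (epsI k) = h oneI := by
  intro k
  induction k with
  | zero => rw [eps_zero]
  | succ n ih =>
    rw [← eps_conj n, hhom, hhom, ih, ← hhom, imon_mul_one, ← hhom]
    have h1 : shI (-1) * shI 1 = epsI 1 := by
      have := sh_neg_mul_sh 1
      norm_num at this
      exact this
    rw [h1, ← hone]

lemma mainShift {S : Type*} [Semigroup S]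
    (f : Imon → ℤ)
    (hf : ∀ γ : Imon, ∃ N : ℕ, ∀ i j : ℕ, N ≤ i → (i, j) ∈ γ.graph →
      (j : ℤ) = (i : ℤ) + f γ)
    (h : Imon → S) (hhom : ∀ x y : Imon, h (x * y) = h x * h y)
    (hone : h oneI = h (epsI 1)) (γ : Imon) : h γ = h (shI (f γ)) := by
  obtain ⟨N₀, habs⟩ := epsAbsorbI f hf γ
  have heps := epsAll h hhom hone N₀
  calc h γ = h (oneI * γ) := by rw [imon_one_mul]
    _ = h oneI * h γ := hhom _ _
    _ = h (epsI N₀) * h γ := by rw [heps]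
    _ = h (epsI N₀ * γ) := (hhom _ _).symm
    _ = h (epsI N₀ * shI (f γ)) := by rw [habs N₀ le_rfl]
    _ = h (epsI N₀) * h (shI (f γ)) := hhom _ _
    _ = h oneI * h (shI (f γ)) := by rw [heps]
    _ = h (oneI * shI (f γ)) := (hhom _ _).symm
    _ = h (shI (f γ)) := by rw [imon_one_mul]



end IHaux

/-- every non-injective semigroup homomorphism `h` from `I∞↗(ℕ)` into a
semigroup `S` factors through the shift homomorphism `f : I∞↗(ℕ) → ℤ` via a homomorphism
`g : ℤ → S`; hence the image of `h` is a cyclic subgroup of `S`. -/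
theorem Imon_hom_factors_through_shift {S : Type*} [Semigroup S]
    (f : Imon → ℤ)
    (hf : ∀ γ : Imon, ∃ N : ℕ, ∀ i j : ℕ, N ≤ i → (i, j) ∈ γ.graph →
      (j : ℤ) = (i : ℤ) + f γ)
    (h : Imon → S) (hhom : ∀ x y : Imon, h (x * y) = h x * h y)
    (hni : ¬ Function.Injective h) :
    ∃ g : ℤ → S, (∀ m n : ℤ, g (m + n) = g m * g n) ∧ h = g ∘ f := by
  rw [Function.Injective] at hni
  push_neg at hni
  obtain ⟨u, v, huv, hne⟩ := hni
  have hone := collapseAll f hf h hhom u v huv hne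
  refine ⟨fun n => h (shI n), ?_, ?_⟩
  · intro m n
    have h1 : h (shI m * shI n) = h (shI (f (shI m * shI n))) := mainShift f hf h hhom hone _
    rw [fShMulSh f hf] at h1
    show h (shI (m + n)) = h (shI m) * h (shI n)
    rw [← h1, hhom]
  · funext γ
    exact mainShift f hf h hhom hone γ
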